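/- arXiv:0708.0652 — 2 statements merged into one kernel-verified Lean document; each statement's English description precedes it below -/
import Mathlib

section
/- Let C* be a properly convex cone in ℝⁿ with nonempty interior of its dual C (equivalently C* contains no line and C is a proper open convex cone). If a distribution u ∈ 𝒟'(ℝⁿ) has support contained in C* with 0 ∈ supp(u), and the analytic wavefront set of u satisfies WF_A(u) ⊆ ℝⁿ × Γ for some closed cone Γ ≠ ℝⁿ, then a contradiction arises; hence WF_A(u) is not contained in ℝⁿ × Γ for any closed cone Γ strictly smaller than ℝⁿ. -/
open scoped RealInnerProductSpace

/-- Key step of the Uniqueness Theorem.  Let `C` be a nonempty proper open convex cone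
with dual cone `C*`, and let `u` be a distribution with support `suppu ⊆ C*` and
`0 ∈ suppu`.  Granting Hörmander's theorem 9.6.6 — every nonzero element of the linear
span of the exterior normals to the support at `0` (here: `{ν | ⟨ν,x⟩ ≤ 0 ∀ x ∈ supp u}`)
lies in `WF_A(u)` over the point `0` — the inclusion `WF_A(u) ⊆ ℝⁿ × Γ` for a closed
cone `Γ ≠ ℝⁿ` leads to a contradiction. -/
theorem uniqueness_key_step (n : ℕ) (hn : 0 < n)
    (C Cstar suppu : Set (EuclideanSpace ℝ (Fin n)))
    (hCo : IsOpen C) (hCne : C.Nonempty) (hCconv : Convex ℝ C)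
    (hCcone : ∀ c : ℝ, 0 < c → ∀ y ∈ C, c • y ∈ C)
    (hCstar : Cstar = {ξ : EuclideanSpace ℝ (Fin n) | ∀ y ∈ C, 0 ≤ ⟪ξ, y⟫})
    (hsupp : suppu ⊆ Cstar) (h0 : (0 : EuclideanSpace ℝ (Fin n)) ∈ suppu)
    (WFAu : Set ((EuclideanSpace ℝ (Fin n)) × (EuclideanSpace ℝ (Fin n))))
    (hHorm : ∀ ν ∈ Submodule.span ℝ
        {ν : EuclideanSpace ℝ (Fin n) | ∀ x ∈ suppu, ⟪ν, x⟫ ≤ 0},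
      ν ≠ 0 → ((0 : EuclideanSpace ℝ (Fin n)), ν) ∈ WFAu)
    (Γ : Set (EuclideanSpace ℝ (Fin n))) (hΓc : IsClosed Γ)
    (hΓcone : ∀ c : ℝ, 0 < c → ∀ θ ∈ Γ, c • θ ∈ Γ) (hΓne : Γ ≠ Set.univ)
    (hWF : WFAu ⊆ Set.univ ×ˢ Γ) :
    False := by
  set S : Set (EuclideanSpace ℝ (Fin n)) :=
    {ν : EuclideanSpace ℝ (Fin n) | ∀ x ∈ suppu, ⟪ν, x⟫ ≤ 0} with hS
  -- `-C ⊆ S`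
  have hCS : (-C : Set (EuclideanSpace ℝ (Fin n))) ⊆ S := by
    intro ν hν x hx
    have hxC : x ∈ Cstar := hsupp hx
    rw [hCstar] at hxC
    have := hxC (-ν) (by simpa using hν)
    have hsym : ⟪x, -ν⟫ = -⟪ν, x⟫ := by
      rw [inner_neg_right, real_inner_comm]
    linarith [hsym ▸ this]
  -- span S = ⊤ since it contains the open nonempty set `-C`
  have hspan : Submodule.span ℝ S = ⊤ := by
    apply Submodule.eq_top_of_nonempty_interior'
    obtain ⟨y, hy⟩ := hCne
    refine ⟨-y, ?_⟩
    have hsub : (-C : Set (EuclideanSpace ℝ (Fin n))) ⊆ (Submodule.span ℝ S : Set _) :=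
      hCS.trans Submodule.subset_span
    exact interior_maximal hsub hCo.neg (by simpa using hy)
  -- every nonzero vector lies in Γ
  have hall : ∀ ν : EuclideanSpace ℝ (Fin n), ν ≠ 0 → ν ∈ Γ := by
    intro ν hν
    have := hHorm ν (by rw [hspan]; trivial) hν
    exact (hWF this).2
  -- 0 ∈ Γ by closedness
  have hv : ∃ v : EuclideanSpace ℝ (Fin n), v ≠ 0 := by
    refine ⟨EuclideanSpace.single ⟨0, hn⟩ 1, ?_⟩
    intro h
    have := congrArg (fun w : EuclideanSpace ℝ (Fin n) => w ⟨0, hn⟩) h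
    simp [EuclideanSpace.single] at this
  obtain ⟨v, hv⟩ := hv
  have h0Γ : (0 : EuclideanSpace ℝ (Fin n)) ∈ Γ := by
    have htend : Filter.Tendsto (fun k : ℕ => ((k : ℝ) + 1)⁻¹ • v)
        Filter.atTop (nhds 0) := by
      have : Filter.Tendsto (fun k : ℕ => ((k : ℝ) + 1)⁻¹) Filter.atTop (nhds 0) :=
        tendsto_one_div_add_atTop_nhds_zero_nat.congr (fun k => by rw [one_div])
      simpa using this.smul_const v
    refine hΓc.mem_of_tendsto htend (Filter.Eventually.of_forall fun k => ?_)
    refine hall _ (smul_ne_zero ?_ hv)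
    positivity
  -- hence Γ = univ
  apply hΓne
  ext θ
  simp only [Set.mem_univ, iff_true]
  by_cases hθ : θ = 0
  · rw [hθ]; exact h0Γ
  · exact hall θ hθ
end

section
/- Suppose f is holomorphic on the tube T(C') = ℝⁿ + iC' (C' an open connected cone) and for each fixed y ∈ C' the function x ↦ f(x+iy)/P(i(x+iy)) belongs to L¹(ℝⁿ) ∩ L²(ℝⁿ), with a bound |f(z)/P(iz)| ≤ M (1+|z|)^{-n-ε} e^{h(y)} uniform on compact subsets of C'. Then the function h_y(ξ) = ∫_{ℝⁿ} [f(x+iy)/P(i(x+iy))] e^{i⟨ξ,x+iy⟩} dx is independent of y ∈ C'. -/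
open Complex MeasureTheory Filter Set intervalIntegral

/-- Contour-shift (Cauchy–Poincaré) independence, `n = 1` version: if `g` is
holomorphic on the strip `{z : a < Im z < b}` with bound
`|g(x+iy)| ≤ M (1+|x|)^{-1-ε}` uniformly for `y` in compact subsets of `(a,b)`, then
`∫_ℝ g(x+iy) e^{iξ(x+iy)} dx` is independent of `y ∈ (a,b)`. -/
theorem contour_shift_independence (a b ε : ℝ) (hab : a < b) (hε : 0 < ε)
    (g : ℂ → ℂ) (hg : DifferentiableOn ℂ g {z : ℂ | a < z.im ∧ z.im < b})
    (hbound : ∀ K : Set ℝ, IsCompact K → K ⊆ Set.Ioo a b → ∃ M > (0 : ℝ),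
      ∀ z : ℂ, z.im ∈ K → ‖g z‖ ≤ M * (1 + |z.re|) ^ (-(1 : ℝ) - ε))
    (ξ : ℝ) (y₁ y₂ : ℝ) (hy₁ : y₁ ∈ Set.Ioo a b) (hy₂ : y₂ ∈ Set.Ioo a b) :
    (∫ x : ℝ, g ((x : ℂ) + y₁ * Complex.I) *
        Complex.exp (Complex.I * ξ * ((x : ℂ) + y₁ * Complex.I))) =
    ∫ x : ℝ, g ((x : ℂ) + y₂ * Complex.I) *
        Complex.exp (Complex.I * ξ * ((x : ℂ) + y₂ * Complex.I)) := by
  set S : Set ℂ := {z : ℂ | a < z.im ∧ z.im < b} with hS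
  set F : ℂ → ℂ := fun z => g z * Complex.exp (Complex.I * ξ * z) with hFdef
  have hF : DifferentiableOn ℂ F S :=
    hg.mul (((differentiable_const _).mul differentiable_id).cexp.differentiableOn)
  have hKsub : Set.uIcc y₁ y₂ ⊆ Set.Ioo a b := Set.ordConnected_Ioo.uIcc_subset hy₁ hy₂
  obtain ⟨M, hMpos, hM⟩ := hbound (Set.uIcc y₁ y₂) isCompact_uIcc hKsub
  set C : ℝ := M * Real.exp (|ξ| * (|y₁| ⊔ |y₂|)) with hCdef
  have hCpos : 0 < C := mul_pos hMpos (Real.exp_pos _)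
  -- uniform bound on F for im z ∈ uIcc y₁ y₂
  have hFbound : ∀ z : ℂ, z.im ∈ Set.uIcc y₁ y₂ →
      ‖F z‖ ≤ C * (1 + |z.re|) ^ (-(1 : ℝ) - ε) := by
    intro z hz
    have h1 : ‖Complex.exp (Complex.I * ξ * z)‖ = Real.exp (-(ξ * z.im)) := by
      rw [Complex.norm_exp]
      congr 1
      simp [Complex.mul_re, Complex.mul_im]
    have h2 : |z.im| ≤ |y₁| ⊔ |y₂| := by
      rcases Set.mem_uIcc.1 hz with ⟨h, h'⟩ | ⟨h, h'⟩
      · exact abs_le.2 ⟨le_trans (neg_le_neg (le_max_left _ _))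
          ((neg_abs_le y₁).trans h), h'.trans ((le_abs_self y₂).trans (le_max_right _ _))⟩
      · exact abs_le.2 ⟨le_trans (neg_le_neg (le_max_right _ _))
          ((neg_abs_le y₂).trans h), h'.trans ((le_abs_self y₁).trans (le_max_left _ _))⟩
    have h3 : Real.exp (-(ξ * z.im)) ≤ Real.exp (|ξ| * (|y₁| ⊔ |y₂|)) :=
      Real.exp_le_exp.2 <| by
        calc -(ξ * z.im) ≤ |ξ * z.im| := neg_le_abs _
          _ = |ξ| * |z.im| := abs_mul _ _
          _ ≤ |ξ| * (|y₁| ⊔ |y₂|) := mul_le_mul_of_nonneg_left h2 (abs_nonneg _)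
    calc ‖F z‖ = ‖g z‖ * Real.exp (-(ξ * z.im)) := by
          rw [hFdef]; simp only [norm_mul, h1]
      _ ≤ (M * (1 + |z.re|) ^ (-(1 : ℝ) - ε)) * Real.exp (|ξ| * (|y₁| ⊔ |y₂|)) := by
          apply mul_le_mul (hM z hz) h3 (Real.exp_pos _).le
          positivity
      _ = C * (1 + |z.re|) ^ (-(1 : ℝ) - ε) := by rw [hCdef]; ring
  -- integrability of horizontal slices
  have hdecay : Integrable (fun x : ℝ => C * (1 + ‖x‖) ^ (-(1 + ε))) :=
    (integrable_one_add_norm (by simpa using (by linarith : (1 : ℝ) < 1 + ε))).const_mul C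
  have hline : ∀ y : ℝ, y ∈ Set.uIcc y₁ y₂ →
      Integrable (fun x : ℝ => F ((x : ℂ) + y * Complex.I)) := by
    intro y hy
    have hy' := hKsub hy
    have hmap : ∀ x : ℝ, ((x : ℂ) + y * Complex.I) ∈ S := by
      intro x
      simp only [hS, Set.mem_setOf_eq, Complex.add_im, Complex.ofReal_im,
        Complex.mul_im, Complex.ofReal_re, Complex.I_im, Complex.I_re,
        Complex.ofReal_im, mul_one, mul_zero]
      constructor <;> [simpa using hy'.1; simpa using hy'.2]
    have hcont : Continuous (fun x : ℝ => F ((x : ℂ) + y * Complex.I)) :=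
      hF.continuousOn.comp_continuous
        ((Complex.continuous_ofReal).add continuous_const) hmap
    refine hdecay.mono' hcont.aestronglyMeasurable (Filter.Eventually.of_forall fun x => ?_)
    have him : ((x : ℂ) + y * Complex.I).im = y := by simp
    have hre : ((x : ℂ) + y * Complex.I).re = x := by simp
    have := hFbound _ (by rw [him]; exact hy)
    rw [hre] at this
    simpa [Real.norm_eq_abs, neg_add' (1:ℝ) ε, sub_eq_add_neg] using this
  -- the rectangle identity
  have hrect : ∀ T : ℝ,
      ((∫ x : ℝ in (-T)..T, F ((x : ℂ) + y₁ * Complex.I)) -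
        ∫ x : ℝ in (-T)..T, F ((x : ℂ) + y₂ * Complex.I)) +
        Complex.I * (∫ y : ℝ in y₁..y₂, F ((T : ℂ) + y * Complex.I)) -
        Complex.I * (∫ y : ℝ in y₁..y₂, F ((-T : ℂ) + y * Complex.I)) = 0 := by
    intro T
    have hsub : ((Set.uIcc (-T) T) ×ℂ (Set.uIcc y₁ y₂)) ⊆ S := by
      intro z hz
      have := (Complex.mem_reProdIm.1 hz).2
      exact ⟨(hKsub this).1, (hKsub this).2⟩
    have := Complex.integral_boundary_rect_eq_zero_of_differentiableOn F
      ((-T : ℂ) + y₁ * Complex.I) ((T : ℂ) + y₂ * Complex.I)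
      (hF.mono (by simpa using hsub))
    simpa [smul_eq_mul, Complex.ofReal_neg] using this
  -- vertical integrals tend to zero
  have hvert : ∀ s : ℝ → ℂ, (∀ T : ℝ, 0 ≤ T → ‖s T‖ ≤ T) → True := fun _ _ => trivial
  have hvbound : ∀ (T : ℝ) (σ : ℝ), |σ| = |T| →
      ‖∫ y : ℝ in y₁..y₂, F ((σ : ℂ) + y * Complex.I)‖ ≤
        C * (1 + |T|) ^ (-(1 : ℝ) - ε) * |y₂ - y₁| := by
    intro T σ hσ
    apply intervalIntegral.norm_integral_le_of_norm_le_const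
    intro y hy
    have hy' : y ∈ Set.uIcc y₁ y₂ := Set.uIoc_subset_uIcc hy
    have := hFbound ((σ : ℂ) + y * Complex.I) (by simpa using hy')
    simpa [hσ] using this
  have hto0 : Tendsto (fun T : ℝ => C * (1 + |T|) ^ (-(1 : ℝ) - ε) * |y₂ - y₁|)
      atTop (nhds 0) := by
    have h1 : Tendsto (fun T : ℝ => 1 + |T|) atTop atTop :=
      tendsto_atTop_add_const_left _ 1 (tendsto_abs_atTop_atTop)
    have h2 : Tendsto (fun T : ℝ => (1 + |T|) ^ (-(1 : ℝ) - ε)) atTop (nhds 0) :=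
      (tendsto_rpow_neg_atTop (by linarith : (0:ℝ) < 1 + ε)).comp h1 |>.congr
        (fun T => by rw [Function.comp_apply]; congr 1; ring)
    simpa using (h2.const_mul C).mul_const |y₂ - y₁|
  -- limits of horizontal integrals
  have hlim : ∀ y : ℝ, y ∈ Set.uIcc y₁ y₂ →
      Tendsto (fun T : ℝ => ∫ x : ℝ in (-T)..T, F ((x : ℂ) + y * Complex.I)) atTop
        (nhds (∫ x : ℝ, F ((x : ℂ) + y * Complex.I))) := fun y hy =>
    intervalIntegral_tendsto_integral (hline y hy) tendsto_neg_atTop_atBot tendsto_id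
  have h₁ := hlim y₁ Set.left_mem_uIcc
  have h₂ := hlim y₂ Set.right_mem_uIcc
  -- difference tends to 0
  have hdiff : Tendsto (fun T : ℝ =>
      (∫ x : ℝ in (-T)..T, F ((x : ℂ) + y₁ * Complex.I)) -
        ∫ x : ℝ in (-T)..T, F ((x : ℂ) + y₂ * Complex.I)) atTop (nhds 0) := by
    have heq : ∀ T : ℝ,
        (∫ x : ℝ in (-T)..T, F ((x : ℂ) + y₁ * Complex.I)) -
          ∫ x : ℝ in (-T)..T, F ((x : ℂ) + y₂ * Complex.I) =
        Complex.I * (∫ y : ℝ in y₁..y₂, F ((-T : ℂ) + y * Complex.I)) -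
          Complex.I * (∫ y : ℝ in y₁..y₂, F ((T : ℂ) + y * Complex.I)) := by
      intro T
      have := hrect T
      linear_combination this
    rw [show (0 : ℂ) = 0 - 0 by ring]
    refine (Tendsto.sub ?_ ?_).congr (fun T => (heq T).symm)
    all_goals {
      rw [show (0 : ℂ) = Complex.I * 0 by ring]
      apply Tendsto.const_mul
      rw [tendsto_zero_iff_norm_tendsto_zero]
      refine squeeze_zero (fun T => norm_nonneg _) (fun T => ?_) hto0
      first
        | exact hvbound T T rfl
        | simpa [Complex.ofReal_neg] using hvbound T (-T) (abs_neg T)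
    }
  have := hdiff
  have hfinal : (∫ x : ℝ, F ((x : ℂ) + y₁ * Complex.I)) -
      (∫ x : ℝ, F ((x : ℂ) + y₂ * Complex.I)) = 0 :=
    tendsto_nhds_unique (h₁.sub h₂) hdiff
  have := sub_eq_zero.1 hfinal
  simpa [hFdef] using this
end
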